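/- Let λ ∈ ℝ^n be nonzero with λ_1 ≥ λ_2 ≥ … ≥ λ_n ≥ 0 and let I be any proper subset of {1,…,n} (possibly empty). Then λ is not in the linear span of the rows of B indexed by I; equivalently, λ together with the rows {B_{i,·} : i ∈ I} (viewed as vectors in ℝ^n) forms a linearly independent family, so the (1+|I|)×n matrix obtained by stacking λᵀ on top of B_I has full row rank 1+|I|. -/

import Mathlib

open Matrix

/-- The matrix `B` with `(Bx)_i = x_i − x_{i+1}` for `1 ≤ i ≤ n−1` and `(Bx)_n = x_n`. -/
def Bmat (n : ℕ) : Matrix (Fin n) (Fin n) ℝ :=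
  Matrix.of fun i j => if j = i then 1 else if (j : ℕ) = (i : ℕ) + 1 then -1 else 0

lemma Bmat_isUnit (n : ℕ) : IsUnit (Bmat n) := by
  rw [Matrix.isUnit_iff_isUnit_det]
  have hdet : (Bmat n).det = 1 := by
    rw [Matrix.det_of_upperTriangular]
    · apply Finset.prod_eq_one
      intro i _
      simp [Bmat]
    · intro i j hji
      have h1 : j ≠ i := ne_of_lt hji
      have hji' : (j : ℕ) < (i : ℕ) := hji
      have h2 : (j : ℕ) ≠ (i : ℕ) + 1 := by omega
      simp [Bmat, h1, h2]
  rw [hdet]; exact isUnit_one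

/-- for a nonzero `λ` with `λ₁ ≥ … ≥ λₙ ≥ 0` and a proper subset `I` of
`{1,…,n}`, `λ` is not in the span of the rows of `B` indexed by `I`; equivalently,
`λ` together with those rows forms a linearly independent family (so the stacked
matrix `[λᵀ; B_I]` has full row rank `1 + |I|`). -/
theorem stmt7 {n : ℕ} (hn : 0 < n) (lam : Fin n → ℝ)
    (hmono : ∀ i j : Fin n, i ≤ j → lam j ≤ lam i)
    (hnonneg : ∀ i, 0 ≤ lam i) (hlam : lam ≠ 0)
    (I : Finset (Fin n)) (hI : I ≠ Finset.univ) :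
    lam ∉ Submodule.span ℝ {v : Fin n → ℝ | ∃ i ∈ I, v = fun j => Bmat n i j} ∧
      LinearIndependent ℝ
        (fun o : Option {i // i ∈ I} =>
          Option.elim o lam (fun i => fun j => Bmat n i.1 j)) := by
  classical
  obtain ⟨k, hk⟩ : ∃ k : Fin n, k ∉ I := by
    by_contra h; push_neg at h; exact hI (Finset.eq_univ_iff_forall.2 h)
  set g : (Fin n → ℝ) →ₗ[ℝ] ℝ := ∑ j ∈ Finset.Iic k, LinearMap.proj j with hgdef
  have hg : ∀ v, g v = ∑ j ∈ Finset.Iic k, v j := by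
    intro v; simp [hgdef]
  have hgB : ∀ i ∈ I, g (fun j => Bmat n i j) = 0 := by
    intro i hi
    have hik : i ≠ k := fun h => hk (h ▸ hi)
    rw [hg]
    have hsplit : ∀ j : Fin n, Bmat n i j
        = (if j = i then (1:ℝ) else 0) + (if (j:ℕ) = (i:ℕ)+1 then (-1:ℝ) else 0) := by
      intro j
      by_cases h1 : j = i
      · subst h1
        have : (j:ℕ) ≠ (j:ℕ) + 1 := by omega
        simp [Bmat, this]
      · by_cases h2 : (j:ℕ) = (i:ℕ)+1 <;> simp [Bmat, h1, h2]
    simp_rw [hsplit, Finset.sum_add_distrib]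
    rw [Finset.sum_ite_eq' (Finset.Iic k) i (fun _ => (1:ℝ))]
    rcases lt_or_gt_of_ne hik with hlt | hgt
    · have hik' : (i:ℕ) < (k:ℕ) := hlt
      have hi1 : (i:ℕ)+1 < n := lt_of_le_of_lt (Nat.succ_le_of_lt hik') k.isLt
      have hiff : ∀ j : Fin n, ((j:ℕ) = (i:ℕ)+1) ↔ j = ⟨(i:ℕ)+1, hi1⟩ := by
        intro j
        constructor
        · intro h; exact Fin.ext h
        · intro h; subst h; rfl
      simp_rw [hiff]
      rw [Finset.sum_ite_eq' (Finset.Iic k) ⟨(i:ℕ)+1, hi1⟩ (fun _ => (-1:ℝ))]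
      have h1 : i ∈ Finset.Iic k := Finset.mem_Iic.2 hlt.le
      have h2 : (⟨(i:ℕ)+1, hi1⟩ : Fin n) ∈ Finset.Iic k := by
        rw [Finset.mem_Iic]
        exact Fin.mk_le_of_le_val (Nat.succ_le_of_lt hik')
      simp [h1, h2]
    · have h1 : i ∉ Finset.Iic k := by
        rw [Finset.mem_Iic]; exact not_le_of_gt hgt
      rw [Finset.sum_eq_zero, if_neg h1, add_zero]
      intro j hj
      have hjk0 : j ≤ k := Finset.mem_Iic.1 hj
      have hjk : (j:ℕ) ≤ (k:ℕ) := hjk0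
      have hki : (k:ℕ) < (i:ℕ) := hgt
      have : (j:ℕ) ≠ (i:ℕ)+1 := by omega
      simp [this]
  -- lam has positive first entry
  obtain ⟨i0, hi0⟩ : ∃ i, lam i ≠ 0 := by
    by_contra h; push_neg at h; exact hlam (funext h)
  have hz : lam ⟨0, hn⟩ > 0 := by
    have h1 : 0 < lam i0 := lt_of_le_of_ne (hnonneg i0) (Ne.symm hi0)
    have h2 : lam i0 ≤ lam ⟨0, hn⟩ := hmono _ _ (by exact Fin.mk_le_of_le_val (Nat.zero_le _))
    linarith
  have hglam : 0 < g lam := by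
    rw [hg]
    apply Finset.sum_pos'
    · intro j _; exact hnonneg j
    · exact ⟨⟨0, hn⟩, Finset.mem_Iic.2 (Fin.mk_le_of_le_val (Nat.zero_le _)), hz⟩
  have hnotmem :
      lam ∉ Submodule.span ℝ {v : Fin n → ℝ | ∃ i ∈ I, v = fun j => Bmat n i j} := by
    intro hmem
    have hle : Submodule.span ℝ {v : Fin n → ℝ | ∃ i ∈ I, v = fun j => Bmat n i j}
        ≤ LinearMap.ker g := by
      rw [Submodule.span_le]
      rintro v ⟨i, hi, rfl⟩
      exact LinearMap.mem_ker.2 (hgB i hi)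
    have := LinearMap.mem_ker.1 (hle hmem)
    rw [this] at hglam
    exact lt_irrefl 0 hglam
  refine ⟨hnotmem, ?_⟩
  have hfull : LinearIndependent ℝ (fun i : Fin n => Bmat n i) :=
    Matrix.linearIndependent_rows_iff_isUnit.2 (Bmat_isUnit n)
  have hsub : LinearIndependent ℝ (fun i : {i // i ∈ I} => fun j => Bmat n i.1 j) :=
    hfull.comp Subtype.val Subtype.val_injective
  have hrange : Set.range (fun i : {i // i ∈ I} => fun j => Bmat n i.1 j)
      = {v : Fin n → ℝ | ∃ i ∈ I, v = fun j => Bmat n i j} := by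
    ext v
    constructor
    · rintro ⟨⟨i, hi⟩, rfl⟩; exact ⟨i, hi, rfl⟩
    · rintro ⟨i, hi, rfl⟩; exact ⟨⟨i, hi⟩, rfl⟩
  have hx : lam ∉ Submodule.span ℝ
      (Set.range (fun i : {i // i ∈ I} => fun j => Bmat n i.1 j)) := by
    rw [hrange]; exact hnotmem
  have := hsub.option hx
  convert this using 1
  funext o
  cases o <;> rfl
  all_goals rfl
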